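/- Let ψ be a constant-free propositional formula over a finite set B of atoms, and let x ∈ ℝ with 0 < x < 1/2. Let D be the weighted ADF over V = [0,1] with flat information ordering, statements S = B ∪ {t} (t ∉ B), and acceptance conditions C_b(w) = w(b) for b ∈ B and C_t(w) = min(ŵ(ψ), x), where ŵ is the fuzzy evaluation. Then the partial interpretation v with v(b) = u for all b ∈ B and v(t) = x is admissible in D if and only if ψ is a classical tautology. -/

import Mathlib

/-- Propositional formulas over a set `S` of atoms, with real constants and the
connectives `∧`, `∨`, `¬`. -/
inductive Fml (S : Type) where
  | atom : S → Fml S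
  | const : ℝ → Fml S
  | conj : Fml S → Fml S → Fml S
  | disj : Fml S → Fml S → Fml S
  | neg : Fml S → Fml S

/-- Fuzzy evaluation of a formula under a real-valued assignment of the atoms:
`∧` is min, `∨` is max, `¬` is `1 - ·`, constants evaluate to themselves. -/
def feval {S : Type} (w : S → ℝ) : Fml S → ℝ
  | .atom a => w a
  | .const c => c
  | .conj φ ψ => min (feval w φ) (feval w ψ)
  | .disj φ ψ => max (feval w φ) (feval w ψ)
  | .neg φ => 1 - feval w φ

open scoped Classical in
/-- Classical two-valued evaluation of a formula under a Boolean assignment of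
the atoms (the constant `1` is identified with true, `0` with false). -/
noncomputable def ceval {S : Type} (v : S → Bool) : Fml S → Bool
  | .atom a => v a
  | .const c => if 1 ≤ c then true else false
  | .conj φ ψ => ceval v φ && ceval v ψ
  | .disj φ ψ => ceval v φ || ceval v ψ
  | .neg φ => ! ceval v φ

/-- A formula is constant-free if it contains no constants. -/
def ConstFree {S : Type} : Fml S → Prop
  | .atom _ => True
  | .const _ => False
  | .conj φ ψ => ConstFree φ ∧ ConstFree ψ
  | .disj φ ψ => ConstFree φ ∧ ConstFree ψ
  | .neg φ => ConstFree φ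

/-- Constants occurring in the formula are only `0` or `1`. -/
def ConstZeroOne {S : Type} : Fml S → Prop
  | .atom _ => True
  | .const c => c = 0 ∨ c = 1
  | .conj φ ψ => ConstZeroOne φ ∧ ConstZeroOne ψ
  | .disj φ ψ => ConstZeroOne φ ∧ ConstZeroOne ψ
  | .neg φ => ConstZeroOne φ

/-- Completions, under the flat information ordering on `[0,1] ∪ {u}`
(with `none` playing the role of `u`), of a partial interpretation `v`:
total interpretations into `[0,1]` agreeing with `v` wherever `v` is defined. -/
def FuzzyCompl {S : Type} (v : S → Option ℝ) (w : S → ℝ) : Prop :=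
  (∀ s, w s ∈ Set.Icc (0:ℝ) 1) ∧ ∀ s, ∀ y : ℝ, v s = some y → w s = y

/-- Completions, under the flat information ordering on `{0,1} ∪ {u}`, of a
partial interpretation `v` whose defined values lie in `{0,1}`: total Boolean
interpretations agreeing with `v` wherever `v` is defined (identifying `1` with
true and `0` with false). -/
def BoolCompl {S : Type} (v : S → Option ℝ) (b : S → Bool) : Prop :=
  ∀ s, (v s = some 1 → b s = true) ∧ (v s = some 0 → b s = false)

/-- Admissibility (`v ≤ Γ_D(v)`) for a wADF `D` over `[0,1]` with flat
information ordering and acceptance conditions `C`: under the flat ordering,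
`v s ≤ Γ_D(v)(s)` holds iff `v s = u` or the flat greatest lower bound
`Γ_D(v)(s)` equals `v s`, i.e. iff every completion of `v` evaluates the
acceptance condition of `s` to the value `v s`. -/
def FlatAdmissible {S : Type} (C : S → (S → ℝ) → ℝ) (v : S → Option ℝ) : Prop :=
  ∀ s, ∀ y : ℝ, v s = some y → ∀ w : S → ℝ, FuzzyCompl v w → C s w = y


lemma feval_bool {B : Type} (a : B → Bool) :
    ∀ φ : Fml B, ConstFree φ →
      feval (fun b => if a b then (1:ℝ) else 0) φ = if ceval a φ then 1 else 0 := by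
  intro φ
  induction φ with
  | atom b => intro _; simp [feval, ceval]; congr
  | const c => intro h; exact absurd h (by simp [ConstFree])
  | conj φ ψ ihφ ihψ =>
      intro h
      rw [ConstFree] at h
      simp only [feval, ceval, ihφ h.1, ihψ h.2]
      rcases Bool.eq_false_or_eq_true (ceval a φ) with h1 | h1 <;>
        rcases Bool.eq_false_or_eq_true (ceval a ψ) with h2 | h2 <;> simp [h1, h2]
  | disj φ ψ ihφ ihψ =>
      intro h
      rw [ConstFree] at h
      simp only [feval, ceval, ihφ h.1, ihψ h.2]
      rcases Bool.eq_false_or_eq_true (ceval a φ) with h1 | h1 <;>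
        rcases Bool.eq_false_or_eq_true (ceval a ψ) with h2 | h2 <;> simp [h1, h2]
  | neg φ ihφ =>
      intro h
      rw [ConstFree] at h
      simp only [feval, ceval, ihφ h]
      rcases Bool.eq_false_or_eq_true (ceval a φ) with h1 | h1 <;> simp [h1]

lemma feval_half {B : Type} (w : B → ℝ) :
    ∀ φ : Fml B, ConstFree φ →
      (ceval (fun b => decide ((1:ℝ)/2 ≤ w b)) φ = true → 1/2 ≤ feval w φ) ∧
      (ceval (fun b => decide ((1:ℝ)/2 ≤ w b)) φ = false → feval w φ ≤ 1/2) := by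
  intro φ
  induction φ with
  | atom b =>
      intro _
      constructor
      · intro h; simpa [ceval, feval] using h
      · intro h; simp only [ceval, decide_eq_false_iff_not, not_le] at h
        exact le_of_lt h
  | const c => intro h; exact absurd h (by simp [ConstFree])
  | conj φ ψ ihφ ihψ =>
      intro h
      rw [ConstFree] at h
      obtain ⟨hφ1, hφ2⟩ := ihφ h.1
      obtain ⟨hψ1, hψ2⟩ := ihψ h.2
      constructor
      · intro hc
        simp only [ceval, Bool.and_eq_true] at hc
        exact le_min (hφ1 hc.1) (hψ1 hc.2)
      · intro hc
        simp only [ceval, Bool.and_eq_false_iff] at hc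
        rcases hc with hc | hc
        · exact le_trans (min_le_left _ _) (hφ2 hc)
        · exact le_trans (min_le_right _ _) (hψ2 hc)
  | disj φ ψ ihφ ihψ =>
      intro h
      rw [ConstFree] at h
      obtain ⟨hφ1, hφ2⟩ := ihφ h.1
      obtain ⟨hψ1, hψ2⟩ := ihψ h.2
      constructor
      · intro hc
        simp only [ceval, Bool.or_eq_true] at hc
        rcases hc with hc | hc
        · exact le_trans (hφ1 hc) (le_max_left _ _)
        · exact le_trans (hψ1 hc) (le_max_right _ _)
      · intro hc
        simp only [ceval, Bool.or_eq_false_iff] at hc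
        exact max_le (hφ2 hc.1) (hψ2 hc.2)
  | neg φ ihφ =>
      intro h
      rw [ConstFree] at h
      obtain ⟨h1, h2⟩ := ihφ h
      constructor
      · intro hc
        simp only [ceval, Bool.not_eq_true'] at hc
        have := h2 hc
        simp only [feval]; linarith
      · intro hc
        simp only [ceval, Bool.not_eq_false'] at hc
        have := h1 hc
        simp only [feval]; linarith

/-- let `ψ` be a constant-free formula over a finite set `B` of
atoms, `0 < x < 1/2`, and `D` the wADF over `[0,1]` with flat information
ordering, statements `B ∪ {t}` (where `t ∉ B` is modeled by `none : Option B`),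
acceptance conditions `C_b(w) = w(b)` for `b ∈ B` and
`C_t(w) = min(ŵ(ψ), x)`. Then the partial interpretation `v` with `v(b) = u`
for all `b ∈ B` and `v(t) = x` is admissible in `D` iff `ψ` is a classical
tautology. -/
theorem admissible_iff_tautology {B : Type} [Fintype B]
    (ψ : Fml B) (hψ : ConstFree ψ) (x : ℝ) (hx0 : 0 < x) (hx1 : x < 1/2)
    (C : Option B → (Option B → ℝ) → ℝ)
    (hCb : ∀ (b : B) (w : Option B → ℝ), C (some b) w = w (some b))
    (hCt : ∀ w : Option B → ℝ,
      C none w = min (feval (fun b => w (some b)) ψ) x)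
    (v : Option B → Option ℝ)
    (hvb : ∀ b : B, v (some b) = none)
    (hvt : v none = some x) :
    FlatAdmissible C v ↔ ∀ a : B → Bool, ceval a ψ = true := by
  constructor
  · intro hadm a
    set w : Option B → ℝ := fun s => match s with
      | none => x
      | some b => if a b then 1 else 0 with hw
    have hcompl : FuzzyCompl v w := by
      constructor
      · intro s
        cases s with
        | none => exact ⟨le_of_lt hx0, by linarith⟩
        | some b => by_cases h : a b <;> simp [hw, h]
      · intro s y hy
        cases s with
        | none =>
            rw [hvt] at hy
            have : y = x := by simpa using hy.symm
            simp [hw, this]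
        | some b => rw [hvb] at hy; exact absurd hy (by simp)
    have hC := hadm none x hvt w hcompl
    rw [hCt] at hC
    by_contra hf
    have hf' : ceval a ψ = false := by
      rcases Bool.eq_false_or_eq_true (ceval a ψ) with h | h
      · exact absurd h hf
      · exact h
    have : feval (fun b => w (some b)) ψ = 0 := by
      have := feval_bool a ψ hψ
      simp only [hf', if_false] at this
      simpa [hw] using this
    rw [this] at hC
    rw [min_eq_left (le_of_lt hx0)] at hC
    linarith
  · intro htaut s y hy w hcompl
    cases s with
    | some b =>
        rw [hvb] at hy; exact absurd hy (by simp)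
    | none =>
        have hyx : y = x := by rw [hvt] at hy; simpa using hy.symm
        subst hyx
        rw [hCt]
        have h := (feval_half (fun b => w (some b)) ψ hψ).1
          (htaut (fun b => decide ((1:ℝ)/2 ≤ w (some b))))
        exact min_eq_right (by linarith)
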